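/- For a dominant f and any element g of a partially ordered group, the relative growth γ(f,g) equals γ*(f,g) := inf{r/s : f^r ≥ g^s, r ∈ ℤ, s ∈ ℕ}. -/
import Mathlib


open Filter

/-- For a dominant `f` and any `g` in a group with a bi-invariant partial
order induced by a normal cone, the relative growth
`γ(f,g) = lim γₙ(f,g)/n` equals `γ*(f,g) = inf{r/s : f^r ≥ g^s, r ∈ ℤ, s ∈ ℕ}`. -/
theorem relative_growth_eq_gamma_star {D : Type*} [Group D] (C : Set D)
    (hmul : ∀ a b, a ∈ C → b ∈ C → a * b ∈ C)
    (hconj : ∀ a b, a ∈ C → b * a * b⁻¹ ∈ C)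
    (hone : (1 : D) ∈ C)
    (hanti : ∀ a b : D, a * b⁻¹ ∈ C → b * a⁻¹ ∈ C → a = b)
    (f : D) (hfC : f ∈ C) (hfne : f ≠ 1)
    (hdom : ∀ x : D, ∃ n : ℕ, f ^ n * x⁻¹ ∈ C)
    (g : D) (γ : ℕ → ℤ)
    (hγ : ∀ n : ℕ, IsLeast {p : ℤ | f ^ p * (g ^ n)⁻¹ ∈ C} (γ n))
    (A : ℝ)
    (hA : Tendsto (fun n : ℕ => (γ n : ℝ) / n) atTop (nhds A)) :
    A = sInf {x : ℝ | ∃ r : ℤ, ∃ s : ℕ, 0 < s ∧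
      f ^ r * ((g ^ s : D))⁻¹ ∈ C ∧ x = (r : ℝ) / s} := by
  set S := {x : ℝ | ∃ r : ℤ, ∃ s : ℕ, 0 < s ∧
      f ^ r * ((g ^ s : D))⁻¹ ∈ C ∧ x = (r : ℝ) / s} with hS
  -- product of inequalities
  have L1 : ∀ a b c d : D, a * b⁻¹ ∈ C → c * d⁻¹ ∈ C → (a * c) * (b * d)⁻¹ ∈ C := by
    intro a b c d h1 h2
    have h := hmul _ _ (hconj _ a h2) h1
    have e : a * (c * d⁻¹) * a⁻¹ * (a * b⁻¹) = (a * c) * (b * d)⁻¹ := by group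
    rwa [e] at h
  -- powers of an inequality
  have L2 : ∀ (r : ℤ) (s : ℕ), f ^ r * (g ^ s)⁻¹ ∈ C → ∀ k : ℕ,
      f ^ ((k : ℤ) * r) * (g ^ (k * s))⁻¹ ∈ C := by
    intro r s h k
    induction k with
    | zero => simpa using hone
    | succ k ih =>
      have e1 : ((k + 1 : ℕ) : ℤ) * r = (k : ℤ) * r + r := by push_cast; ring
      have e2 : (k + 1) * s = k * s + s := by ring
      rw [e1, e2, zpow_add, pow_add]
      exact L1 _ _ _ _ ih h
  -- S is nonempty
  obtain ⟨m, hm⟩ := hdom g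
  have hne : S.Nonempty := by
    refine ⟨(m : ℝ) / 1, (m : ℤ), 1, one_pos, ?_, by norm_num⟩
    simpa [zpow_natCast] using hm
  -- A is a lower bound of S
  have hlb : ∀ x ∈ S, A ≤ x := by
    rintro x ⟨r, s, hs, hC, rfl⟩
    have hmap : Tendsto (fun k : ℕ => k * s) atTop atTop :=
      tendsto_atTop_atTop.mpr fun b => ⟨b, fun a ha =>
        le_trans ha (Nat.le_mul_of_pos_right a hs)⟩
    refine le_of_tendsto (hA.comp hmap) ?_
    filter_upwards [eventually_ge_atTop 1] with k hk
    have hkpos : (0 : ℝ) < k := by exact_mod_cast hk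
    have hspos : (0 : ℝ) < s := by exact_mod_cast hs
    have h1 : γ (k * s) ≤ (k : ℤ) * r := (hγ (k * s)).2 (L2 r s hC k)
    have h1' : (γ (k * s) : ℝ) ≤ (k : ℝ) * r := by exact_mod_cast h1
    have hks : (0 : ℝ) < ((k * s : ℕ) : ℝ) := by positivity
    show (γ (k * s) : ℝ) / ((k * s : ℕ) : ℝ) ≤ (r : ℝ) / s
    calc (γ (k * s) : ℝ) / ((k * s : ℕ) : ℝ)
        ≤ ((k : ℝ) * r) / ((k * s : ℕ) : ℝ) := by
          gcongr
      _ = (r : ℝ) / s := by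
          push_cast
          rw [mul_div_mul_left _ _ (ne_of_gt hkpos)]
  -- A is the greatest lower bound
  have hglb : ∀ b, (∀ x ∈ S, b ≤ x) → b ≤ A := by
    intro b hb
    refine ge_of_tendsto hA ?_
    filter_upwards [eventually_ge_atTop 1] with n hn
    exact hb _ ⟨γ n, n, hn, (hγ n).1, rfl⟩
  exact (IsGLB.csInf_eq ⟨hlb, fun b hb => hglb b hb⟩ hne).symm
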